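/- arXiv:2404.09351 — 3 statements merged into one kernel-verified Lean document; each statement's English description precedes it below -/
import Mathlib

section
/- Let $1 \le p, q < \infty$. Let $u \in A_q$ and $v \in A_p$ be weights on $\mathbb{R}^n$, and set $W = (u/v)^{1/p}$. Then $W \in A_{1 + q/p}$ and $[W]_{A_{1+q/p}} \le [u]_{A_q}^{1/p} [v]_{A_p}^{1/p}$. -/
open MeasureTheory
open scoped ENNReal

/-- The open axis-parallel cube with lower corner `c` and side length `l` in `ℝⁿ`. -/
def cube (n : ℕ) (c : Fin n → ℝ) (l : ℝ) : Set (Fin n → ℝ) :=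
  Set.univ.pi fun i => Set.Ioo (c i) (c i + l)

/-- The Muckenhoupt `A₁` constant of a weight `w` on `ℝⁿ`. -/
noncomputable def A1Const (n : ℕ) (w : (Fin n → ℝ) → ℝ) : ℝ≥0∞ :=
  ⨆ (c : Fin n → ℝ) (l : ℝ) (_ : 0 < l),
    (∫⁻ x in cube n c l, ENNReal.ofReal (w x)) / volume (cube n c l) *
      (essInf (fun x => ENNReal.ofReal (w x)) (volume.restrict (cube n c l)))⁻¹

/-- The Muckenhoupt `A_r` constant of a weight `w` on `ℝⁿ`, for `r ≥ 1`:
for `r = 1` it is the `A₁` constant, and for `r > 1` it is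
`sup_Q (⨍_Q w) (⨍_Q w^{1-r'})^{r-1}` where `1 - r' = -1/(r-1)`. -/
noncomputable def ApConst (n : ℕ) (r : ℝ) (w : (Fin n → ℝ) → ℝ) : ℝ≥0∞ :=
  if r = 1 then A1Const n w
  else
    ⨆ (c : Fin n → ℝ) (l : ℝ) (_ : 0 < l),
      (∫⁻ x in cube n c l, ENNReal.ofReal (w x)) / volume (cube n c l) *
        ((∫⁻ x in cube n c l, ENNReal.ofReal (w x ^ (-(1 : ℝ) / (r - 1)))) /
            volume (cube n c l)) ^ (r - 1)

lemma cube_volume (n : ℕ) (c : Fin n → ℝ) (l : ℝ) :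
    volume (cube n c l) = ENNReal.ofReal l ^ n := by
  rw [cube, volume_pi_pi]
  simp [Real.volume_Ioo]

section aux
variable {α : Type*} [MeasurableSpace α] {μ : Measure α}

lemma holder_step {F G : α → ℝ≥0∞} (hF : Measurable F) (hG : Measurable G)
    {a : ℝ} (ha : 1 < a) :
    (∫⁻ x, F x ^ (1/a) * G x ^ (-(1/a)) ∂μ) ≤
      (∫⁻ x, F x ∂μ) ^ (1/a) * (∫⁻ x, G x ^ (-(1/(a-1))) ∂μ) ^ ((a-1)/a) := by
  have ha0 : a ≠ 0 := by linarith
  have ha1 : a - 1 ≠ 0 := by linarith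
  have hpq : a.HolderConjugate (a/(a-1)) := Real.HolderConjugate.conjExponent ha
  have h := ENNReal.lintegral_mul_le_Lp_mul_Lq μ hpq
      (f := fun x => F x ^ (1/a)) (g := fun x => G x ^ (-(1/a)))
      (hF.pow_const _).aemeasurable (hG.pow_const _).aemeasurable
  simp only [Pi.mul_apply, ← ENNReal.rpow_mul] at h
  rw [show (1/a) * a = 1 by field_simp, show (-(1/a)) * (a/(a-1)) = -(1/(a-1)) by field_simp,
    show 1/(a/(a-1)) = (a-1)/a by rw [one_div_div]] at h
  simpa using h

lemma holder_pow {F G : α → ℝ≥0∞} (hF : Measurable F) (hG : Measurable G)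
    {a : ℝ} (ha : 1 < a) :
    (∫⁻ x, F x ^ (1/a) * G x ^ (-(1/a)) ∂μ) ^ a ≤
      (∫⁻ x, F x ∂μ) * (∫⁻ x, G x ^ (-(1/(a-1))) ∂μ) ^ (a - 1) := by
  have ha0 : (0:ℝ) < a := lt_trans zero_lt_one ha
  have h := ENNReal.rpow_le_rpow (holder_step hF hG ha (μ := μ)) ha0.le
  rwa [ENNReal.mul_rpow_of_nonneg _ _ ha0.le, ← ENNReal.rpow_mul, ← ENNReal.rpow_mul,
    one_div_mul_cancel ha0.ne', div_mul_cancel₀ _ ha0.ne', ENNReal.rpow_one] at h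

lemma linf_step {F G : α → ℝ≥0∞} (hG : AEMeasurable G μ) :
    (∫⁻ x, G x * (F x)⁻¹ ∂μ) ≤ (∫⁻ x, G x ∂μ) * (essInf F μ)⁻¹ := by
  calc ∫⁻ x, G x * (F x)⁻¹ ∂μ ≤ ∫⁻ x, G x * (essInf F μ)⁻¹ ∂μ := by
        refine lintegral_mono_ae ?_
        filter_upwards [ae_essInf_le (f := F) (μ := μ)] with x hx
        exact mul_le_mul_right (ENNReal.inv_le_inv.2 hx) _
    _ = _ := lintegral_mul_const'' _ hG

lemma combine {Iw Iw' Iu Iv X Y V : ℝ≥0∞} {p q : ℝ} (hp0 : 0 < p) (hq0 : 0 < q)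
    (hV0 : V ≠ 0) (hVt : V ≠ ⊤)
    (h1 : Iw ^ p ≤ Iu * X) (h2 : Iw' ^ q ≤ Iv * Y) :
    Iw / V * (Iw' / V) ^ (q / p) ≤
      (Iu / V * (Y / V ^ (q - 1))) ^ (1 / p) * (Iv / V * (X / V ^ (p - 1))) ^ (1 / p) := by
  have h1p0 : (0:ℝ) ≤ 1 / p := by positivity
  have hK0 : V⁻¹ ≠ 0 := ENNReal.inv_ne_zero.2 hVt
  have hKt : V⁻¹ ≠ ⊤ := ENNReal.inv_ne_top.2 hV0
  have hKadd : ∀ a : ℝ, (V⁻¹) ^ a = V⁻¹ * (V⁻¹) ^ (a - 1) := by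
    intro a
    have h := ENNReal.rpow_add 1 (a - 1) hK0 hKt
    rw [ENNReal.rpow_one] at h
    rw [← h]
    congr 1
    ring
  simp only [div_eq_mul_inv, ← ENNReal.inv_rpow]
  calc Iw * V⁻¹ * (Iw' * V⁻¹) ^ (q/p)
      = ((Iw * V⁻¹) ^ p * (Iw' * V⁻¹) ^ q) ^ (1/p) := by
        rw [ENNReal.mul_rpow_of_nonneg _ _ h1p0, ← ENNReal.rpow_mul, ← ENNReal.rpow_mul,
          mul_one_div_cancel hp0.ne', show q * (1/p) = q/p by ring, ENNReal.rpow_one]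
    _ ≤ ((Iu * V⁻¹ * (Y * (V⁻¹) ^ (q-1))) * (Iv * V⁻¹ * (X * (V⁻¹) ^ (p-1)))) ^ (1/p) := by
        refine ENNReal.rpow_le_rpow ?_ h1p0
        calc (Iw * V⁻¹) ^ p * (Iw' * V⁻¹) ^ q
            = Iw ^ p * Iw' ^ q * ((V⁻¹) ^ p * (V⁻¹) ^ q) := by
              rw [ENNReal.mul_rpow_of_nonneg _ _ hp0.le, ENNReal.mul_rpow_of_nonneg _ _ hq0.le]
              ring
          _ ≤ (Iu * X) * (Iv * Y) * ((V⁻¹) ^ p * (V⁻¹) ^ q) :=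
              mul_le_mul_left (mul_le_mul' h1 h2) _
          _ = _ := by rw [hKadd p, hKadd q]; ring
    _ = _ := ENNReal.mul_rpow_of_nonneg _ _ h1p0

end aux

/-- for `1 ≤ p, q < ∞`, `u ∈ A_q`, `v ∈ A_p`, the weight `W = (u/v)^{1/p}`
belongs to `A_{1+q/p}` with `[W]_{A_{1+q/p}} ≤ [u]_{A_q}^{1/p} [v]_{A_p}^{1/p}`. -/
theorem stmt7 (n : ℕ) (p q : ℝ) (hp : 1 ≤ p) (hq : 1 ≤ q)
    (u v : (Fin n → ℝ) → ℝ) (hum : Measurable u) (hvm : Measurable v)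
    (hup : ∀ x, 0 < u x) (hvp : ∀ x, 0 < v x)
    (huloc : LocallyIntegrable u volume) (hvloc : LocallyIntegrable v volume)
    (hu : ApConst n q u < ⊤) (hv : ApConst n p v < ⊤) :
    ApConst n (1 + q / p) (fun x => (u x / v x) ^ (1 / p)) ≤
        ApConst n q u ^ (1 / p) * ApConst n p v ^ (1 / p) ∧
      ApConst n (1 + q / p) (fun x => (u x / v x) ^ (1 / p)) < ⊤ := by
  have hp0 : (0:ℝ) < p := lt_of_lt_of_le zero_lt_one hp
  have hq0 : (0:ℝ) < q := lt_of_lt_of_le zero_lt_one hq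
  have h1p0 : (0:ℝ) ≤ 1 / p := by positivity
  have hrne : 1 + q / p ≠ 1 := by
    have := (div_pos hq0 hp0).ne'
    intro h
    apply this
    linarith
  have main : ApConst n (1 + q / p) (fun x => (u x / v x) ^ (1 / p)) ≤
      ApConst n q u ^ (1 / p) * ApConst n p v ^ (1 / p) := by
    simp only [ApConst, if_neg hrne]
    refine iSup_le fun c => iSup_le fun l => iSup_le fun hl => ?_
    have hV0 : volume (cube n c l) ≠ 0 := by
      rw [cube_volume]
      exact pow_ne_zero n (ENNReal.ofReal_pos.2 hl).ne'
    have hVt : volume (cube n c l) ≠ ⊤ := by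
      rw [cube_volume]
      exact ENNReal.pow_ne_top ENNReal.ofReal_ne_top
    have hof : ∀ (x : Fin n → ℝ) (s : ℝ), ENNReal.ofReal ((u x / v x) ^ s) =
        ENNReal.ofReal (u x) ^ s * ENNReal.ofReal (v x) ^ (-s) := by
      intro x s
      rw [← ENNReal.ofReal_rpow_of_pos (div_pos (hup x) (hvp x)),
        ENNReal.ofReal_div_of_pos (hvp x), div_eq_mul_inv,
        ENNReal.mul_rpow_of_ne_top ENNReal.ofReal_ne_top
          (ENNReal.inv_ne_top.2 (ENNReal.ofReal_pos.2 (hvp x)).ne'),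
        ENNReal.inv_rpow, ← ENNReal.rpow_neg]
    have ew : ∀ x : Fin n → ℝ, ENNReal.ofReal ((u x / v x) ^ (1 / p)) =
        ENNReal.ofReal (u x) ^ (1/p) * ENNReal.ofReal (v x) ^ (-(1/p)) := fun x => hof x (1/p)
    have ew' : ∀ x : Fin n → ℝ,
        ENNReal.ofReal (((u x / v x) ^ (1 / p)) ^ (-(1 : ℝ) / (1 + q / p - 1))) =
        ENNReal.ofReal (u x) ^ (-(1/q)) * ENNReal.ofReal (v x) ^ (1/q) := by
      intro x
      rw [← Real.rpow_mul (div_pos (hup x) (hvp x)).le,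
        show (1/p) * (-(1 : ℝ) / (1 + q / p - 1)) = -(1/q) by
          field_simp
          rw [show p + q - p = q by ring, div_self hq0.ne'],
        hof x (-(1/q)), neg_neg]
    simp only [ew, ew']
    rw [show 1 + q / p - 1 = q / p by ring]
    obtain ⟨Y, h2, hTu⟩ : ∃ Y,
        (∫⁻ x in cube n c l,
            ENNReal.ofReal (u x) ^ (-(1/q)) * ENNReal.ofReal (v x) ^ (1/q)) ^ q ≤
          (∫⁻ x in cube n c l, ENNReal.ofReal (v x)) * Y ∧
        (∫⁻ x in cube n c l, ENNReal.ofReal (u x)) / volume (cube n c l) *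
            (Y / volume (cube n c l) ^ (q - 1)) ≤ ApConst n q u := by
      rcases eq_or_lt_of_le hq with hq1 | hq1
      · subst hq1
        refine ⟨(essInf (fun x => ENNReal.ofReal (u x)) (volume.restrict (cube n c l)))⁻¹,
          ?_, ?_⟩
        · rw [ENNReal.rpow_one]
          have e2 : ∀ x : Fin n → ℝ,
              ENNReal.ofReal (u x) ^ (-((1:ℝ)/1)) * ENNReal.ofReal (v x) ^ ((1:ℝ)/1) =
              ENNReal.ofReal (v x) * (ENNReal.ofReal (u x))⁻¹ := by
            intro x
            rw [show ((1:ℝ)/1) = 1 by norm_num, ENNReal.rpow_neg, ENNReal.rpow_one,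
              ENNReal.rpow_one]
            exact mul_comm _ _
          rw [lintegral_congr e2]
          exact linf_step hvm.ennreal_ofReal.aemeasurable
        · rw [show (1:ℝ) - 1 = 0 by norm_num, ENNReal.rpow_zero, div_one]
          simp only [ApConst, if_pos rfl, A1Const]
          exact le_iSup_of_le c (le_iSup_of_le l (le_iSup_of_le hl le_rfl))
      · refine ⟨(∫⁻ x in cube n c l, ENNReal.ofReal (u x ^ (-(1:ℝ)/(q-1)))) ^ (q-1), ?_, ?_⟩
        · have e2 : ∀ x : Fin n → ℝ,
              ENNReal.ofReal (u x) ^ (-(1/q)) * ENNReal.ofReal (v x) ^ (1/q) =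
              ENNReal.ofReal (v x) ^ (1/q) * ENNReal.ofReal (u x) ^ (-(1/q)) := fun x =>
            mul_comm _ _
          have e3 : ∀ x : Fin n → ℝ, ENNReal.ofReal (u x) ^ (-(1/(q-1))) =
              ENNReal.ofReal (u x ^ (-(1:ℝ)/(q-1))) := by
            intro x
            rw [neg_div]
            exact ENNReal.ofReal_rpow_of_pos (hup x)
          rw [lintegral_congr e2]
          have h := holder_pow (μ := volume.restrict (cube n c l))
            hvm.ennreal_ofReal hum.ennreal_ofReal hq1
          rw [lintegral_congr e3] at h
          exact h
        · rw [← ENNReal.div_rpow_of_nonneg _ _ (by linarith : (0:ℝ) ≤ q - 1)]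
          simp only [ApConst, if_neg hq1.ne']
          exact le_iSup_of_le c (le_iSup_of_le l (le_iSup_of_le hl le_rfl))
    obtain ⟨X, h1, hTv⟩ : ∃ X,
        (∫⁻ x in cube n c l,
            ENNReal.ofReal (u x) ^ (1/p) * ENNReal.ofReal (v x) ^ (-(1/p))) ^ p ≤
          (∫⁻ x in cube n c l, ENNReal.ofReal (u x)) * X ∧
        (∫⁻ x in cube n c l, ENNReal.ofReal (v x)) / volume (cube n c l) *
            (X / volume (cube n c l) ^ (p - 1)) ≤ ApConst n p v := by
      rcases eq_or_lt_of_le hp with hp1 | hp1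
      · subst hp1
        refine ⟨(essInf (fun x => ENNReal.ofReal (v x)) (volume.restrict (cube n c l)))⁻¹,
          ?_, ?_⟩
        · rw [ENNReal.rpow_one]
          have e2 : ∀ x : Fin n → ℝ,
              ENNReal.ofReal (u x) ^ ((1:ℝ)/1) * ENNReal.ofReal (v x) ^ (-((1:ℝ)/1)) =
              ENNReal.ofReal (u x) * (ENNReal.ofReal (v x))⁻¹ := by
            intro x
            rw [show ((1:ℝ)/1) = 1 by norm_num, ENNReal.rpow_neg, ENNReal.rpow_one,
              ENNReal.rpow_one]
          rw [lintegral_congr e2]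
          exact linf_step hum.ennreal_ofReal.aemeasurable
        · rw [show (1:ℝ) - 1 = 0 by norm_num, ENNReal.rpow_zero, div_one]
          simp only [ApConst, if_pos rfl, A1Const]
          exact le_iSup_of_le c (le_iSup_of_le l (le_iSup_of_le hl le_rfl))
      · refine ⟨(∫⁻ x in cube n c l, ENNReal.ofReal (v x ^ (-(1:ℝ)/(p-1)))) ^ (p-1), ?_, ?_⟩
        · have e3 : ∀ x : Fin n → ℝ, ENNReal.ofReal (v x) ^ (-(1/(p-1))) =
              ENNReal.ofReal (v x ^ (-(1:ℝ)/(p-1))) := by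
            intro x
            rw [neg_div]
            exact ENNReal.ofReal_rpow_of_pos (hvp x)
          have h := holder_pow (μ := volume.restrict (cube n c l))
            hum.ennreal_ofReal hvm.ennreal_ofReal hp1
          rw [lintegral_congr e3] at h
          exact h
        · rw [← ENNReal.div_rpow_of_nonneg _ _ (by linarith : (0:ℝ) ≤ p - 1)]
          simp only [ApConst, if_neg hp1.ne']
          exact le_iSup_of_le c (le_iSup_of_le l (le_iSup_of_le hl le_rfl))
    exact le_trans (combine hp0 hq0 hV0 hVt h1 h2)
      (mul_le_mul' (ENNReal.rpow_le_rpow hTu h1p0) (ENNReal.rpow_le_rpow hTv h1p0))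
  exact ⟨main, lt_of_le_of_lt main
    (ENNReal.mul_lt_top (ENNReal.rpow_lt_top_of_nonneg h1p0 hu.ne)
      (ENNReal.rpow_lt_top_of_nonneg h1p0 hv.ne))⟩
end

section
/- Let $1 \le q < p < \infty$, let $w$ be a weight on $\mathbb{R}^n$, let $f$ be measurable, and let $h$ be a measurable function with $h(x) \ge |f(x)|$ for a.e. $x$. Set $v = h^{q-p} w$. Then $\|f\|_{L^{p,1}(v)} \le \frac{p}{q} \, \|f\|_{L^{q, q/p}(w)}^{q/p}$. -/
open MeasureTheory
open scoped ENNReal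

/-- The Lorentz quasi-norm `‖f‖_{L^{r,s}(ϖ)}` with respect to a weight `ϖ` on `ℝⁿ`:
`(r ∫₀^∞ y^s λ_f^ϖ(y)^{s/r} dy/y)^{1/s}`, where `λ_f^ϖ(y) = ∫_{{|f|>y}} ϖ`. -/
noncomputable def lorentzW (n : ℕ) (ϖ : (Fin n → ℝ) → ℝ) (r s : ℝ)
    (f : (Fin n → ℝ) → ℝ) : ℝ≥0∞ :=
  (ENNReal.ofReal r * ∫⁻ y in Set.Ioi (0 : ℝ),
      ENNReal.ofReal y ^ s *
        (∫⁻ x in {x | y < |f x|}, ENNReal.ofReal (ϖ x)) ^ (s / r) *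
          (ENNReal.ofReal y)⁻¹) ^ (1 / s)

/-- for `1 ≤ q < p < ∞`, a weight `w`, `h ≥ |f|` a.e., and
`v = h^{q-p} w`, one has `‖f‖_{L^{p,1}(v)} ≤ (p/q) ‖f‖_{L^{q,q/p}(w)}^{q/p}`. -/
theorem stmt12 (n : ℕ) (p q : ℝ) (hq : 1 ≤ q) (hqp : q < p)
    (w f h : (Fin n → ℝ) → ℝ) (hwm : Measurable w) (hwp : ∀ x, 0 < w x)
    (hfm : Measurable f) (hhm : Measurable h)
    (hfh : ∀ᵐ x ∂volume, |f x| ≤ h x) :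
    lorentzW n (fun x => h x ^ (q - p) * w x) p 1 f ≤
      ENNReal.ofReal (p / q) * lorentzW n w q (q / p) f ^ (q / p) := by
  have hq0 : (0:ℝ) < q := lt_of_lt_of_le one_pos hq
  have hp0 : (0:ℝ) < p := hq0.trans hqp
  unfold lorentzW
  rw [one_div_one, ENNReal.rpow_one, ← ENNReal.rpow_mul,
    one_div_mul_cancel (div_pos hq0 hp0).ne', ENNReal.rpow_one,
    ← mul_assoc, ← ENNReal.ofReal_mul (by positivity : (0:ℝ) ≤ p / q),
    div_mul_cancel₀ p hq0.ne']
  refine mul_le_mul_right ?_ _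
  refine setLIntegral_mono' measurableSet_Ioi fun y hy => ?_
  simp only [Set.mem_Ioi] at hy
  have hS : MeasurableSet {x | y < |f x|} := measurableSet_lt measurable_const hfm.abs
  have key : (∫⁻ x in {x | y < |f x|}, ENNReal.ofReal (h x ^ (q - p) * w x))
      ≤ ENNReal.ofReal (y ^ (q - p)) * ∫⁻ x in {x | y < |f x|}, ENNReal.ofReal (w x) := by
    rw [← lintegral_const_mul' _ _ ENNReal.ofReal_ne_top]
    refine lintegral_mono_ae ?_
    filter_upwards [ae_restrict_of_ae hfh, ae_restrict_mem hS] with x hfx hxS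
    have hxS' : y < |f x| := hxS
    have hhx : 0 < h x := lt_of_lt_of_le (hy.trans hxS') hfx
    rw [ENNReal.ofReal_mul (Real.rpow_nonneg hhx.le _)]
    exact mul_le_mul_left (ENNReal.ofReal_le_ofReal
      (Real.rpow_le_rpow_of_nonpos hy (hxS'.le.trans hfx) (by linarith))) _
  have hep : q / p / q = 1 / p := by
    rw [div_right_comm, div_self hq0.ne']
  rw [hep]
  refine mul_le_mul_left ?_ _
  calc ENNReal.ofReal y ^ (1:ℝ)
        * (∫⁻ x in {x | y < |f x|}, ENNReal.ofReal (h x ^ (q - p) * w x)) ^ (1 / p)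
      ≤ ENNReal.ofReal y * (ENNReal.ofReal (y ^ (q - p))
          * ∫⁻ x in {x | y < |f x|}, ENNReal.ofReal (w x)) ^ (1 / p) := by
        rw [ENNReal.rpow_one]
        exact mul_le_mul_right (ENNReal.rpow_le_rpow key (by positivity)) _
    _ = ENNReal.ofReal y * (ENNReal.ofReal (y ^ (q - p)) ^ (1 / p)
          * (∫⁻ x in {x | y < |f x|}, ENNReal.ofReal (w x)) ^ (1 / p)) := by
        rw [ENNReal.mul_rpow_of_nonneg _ _ (by positivity)]
    _ = ENNReal.ofReal y ^ (q / p)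
          * (∫⁻ x in {x | y < |f x|}, ENNReal.ofReal (w x)) ^ (1 / p) := by
        have h1 : (1:ℝ) + (q - p) * (1 / p) = q / p := by field_simp; ring
        have hmul : y * (y ^ (q - p)) ^ (1 / p) = y ^ (q / p) := by
          rw [← Real.rpow_mul hy.le, ← h1, Real.rpow_add hy, Real.rpow_one]
        rw [← mul_assoc, ENNReal.ofReal_rpow_of_pos (Real.rpow_pos_of_pos hy _),
          ← ENNReal.ofReal_mul hy.le, hmul,
          ENNReal.ofReal_rpow_of_pos hy]
end

section
/- Fix $1 \le q \le p < \infty$ with $p > 1$, and an integer $N \ge 1$. Let $w \in \widehat{A}_{q,N}$ and $h \in L^1_{loc}(\mathbb{R}^n)$ with $Mh$ positive and finite a.e. Then $v = (Mh)^{q-p} w$ belongs to $\widehat{A}_{p,N+1}$ and $\|v\|_{\widehat{A}_{p,N+1}} \le \|w\|_{\widehat{A}_{q,N}}^{q/p}$. -/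
open MeasureTheory
open scoped ENNReal

/-- The Hardy–Littlewood maximal function over axis-parallel cubes. -/
noncomputable def maxFn (n : ℕ) (h : (Fin n → ℝ) → ℝ) (x : Fin n → ℝ) : ℝ≥0∞ :=
  ⨆ (c : Fin n → ℝ) (l : ℝ) (_ : 0 < l) (_ : x ∈ cube n c l),
    (∫⁻ y in cube n c l, ENNReal.ofReal |h y|) / volume (cube n c l)

/-- `u ∈ A₁` realizes a representation of `w` in the class `Â_{r,N}`, i.e.
`w = (∏_{i<N} (M hᵢ)^{θᵢ})^{1-r} u` a.e. for some `hᵢ ∈ L¹_loc` and `θᵢ ∈ (0,1]`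
with `∑ θᵢ = 1`. -/
def AhatRep (n : ℕ) (r : ℝ) (N : ℕ) (w u : (Fin n → ℝ) → ℝ) : Prop :=
  ∃ (h : Fin N → (Fin n → ℝ) → ℝ) (θ : Fin N → ℝ),
    (∀ i, Measurable (h i)) ∧ (∀ i, LocallyIntegrable (h i) volume) ∧
    (∀ i, 0 < θ i ∧ θ i ≤ 1) ∧ (∑ i, θ i = 1) ∧
    Measurable u ∧ (∀ x, 0 < u x) ∧ LocallyIntegrable u volume ∧ A1Const n u < ⊤ ∧
    ∀ᵐ x ∂volume, w x = (∏ i, (maxFn n (h i) x).toReal ^ θ i) ^ (1 - r) * u x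

/-- Membership in the class `Â_{r,N}`. -/
def memAhat (n : ℕ) (r : ℝ) (N : ℕ) (w : (Fin n → ℝ) → ℝ) : Prop :=
  ∃ u, AhatRep n r N w u

/-- The constant `‖w‖_{Â_{r,N}} = inf [u]_{A₁}^{1/r}`, infimum over all representations. -/
noncomputable def AhatConst (n : ℕ) (r : ℝ) (N : ℕ) (w : (Fin n → ℝ) → ℝ) : ℝ≥0∞ :=
  ⨅ (u : (Fin n → ℝ) → ℝ) (_ : AhatRep n r N w u), A1Const n u ^ (1 / r)

lemma rep_lift (n : ℕ) (p q : ℝ) (hq : 1 ≤ q) (hqp : q ≤ p) (hp : 1 < p)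
    (N : ℕ) (hN : 1 ≤ N) (w u : (Fin n → ℝ) → ℝ) (hrep : AhatRep n q N w u)
    (h : (Fin n → ℝ) → ℝ) (hhm : Measurable h) (hhloc : LocallyIntegrable h volume)
    (hMh : ∀ᵐ x ∂volume, 0 < maxFn n h x ∧ maxFn n h x < ⊤) :
    AhatRep n p (N + 1) (fun x => (maxFn n h x).toReal ^ (q - p) * w x) u := by
  obtain ⟨hs, θ, hmeas, hloc, hθ, hθsum, hum, hupos, huloc, huA1, hae⟩ := hrep
  rcases eq_or_lt_of_le hq with hq1 | hq1
  · -- q = 1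
    refine ⟨fun _ => h, fun _ => 1 / (N + 1 : ℝ), fun _ => hhm, fun _ => hhloc, ?_, ?_, hum,
      hupos, huloc, huA1, ?_⟩
    · intro i
      constructor
      · positivity
      · rw [div_le_one (by positivity)]
        have h0 : (0 : ℝ) ≤ (N : ℝ) := Nat.cast_nonneg N
        have : (1 : ℝ) ≤ (N : ℝ) + 1 := by linarith
        linarith
    · rw [Finset.sum_const, Finset.card_univ, Fintype.card_fin, nsmul_eq_mul]
      push_cast
      field_simp
    · filter_upwards [hae, hMh] with x hx hm
      have hm0 : 0 < (maxFn n h x).toReal := ENNReal.toReal_pos hm.1.ne' hm.2.ne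
      have hprod : (∏ _j : Fin (N + 1), (maxFn n h x).toReal ^ (1 / (N + 1 : ℝ)))
          = (maxFn n h x).toReal := by
        rw [Finset.prod_const, Finset.card_univ, Fintype.card_fin, ← Real.rpow_natCast _ (N + 1),
          ← Real.rpow_mul hm0.le]
        push_cast
        rw [one_div_mul_cancel (by positivity), Real.rpow_one]
      rw [hprod, ← hq1] at *
      simp only [sub_self, Real.rpow_zero, one_mul] at hx
      rw [hx]
  · rcases eq_or_lt_of_le hqp with hqp1 | hqp1
    · -- q = p
      obtain ⟨M, rfl⟩ : ∃ M, N = M + 1 := ⟨N - 1, (Nat.succ_pred_eq_of_pos hN).symm⟩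
      set g : Fin (M + 1 + 1) → (Fin n → ℝ) → ℝ := Fin.cons (hs 0) hs with hg
      set τ : Fin (M + 1 + 1) → ℝ := Fin.cons (θ 0 / 2) (Fin.cons (θ 0 / 2) (Fin.tail θ)) with hτ
      refine ⟨g, τ, ?_, ?_, ?_, ?_, hum, hupos, huloc, huA1, ?_⟩
      · intro i
        refine Fin.cases ?_ (fun j => ?_) i
        · exact hmeas 0
        · exact hmeas j
      · intro i
        refine Fin.cases ?_ (fun j => ?_) i
        · exact hloc 0
        · exact hloc j
      · intro i
        refine Fin.cases ?_ (fun j => Fin.cases ?_ (fun k => ?_) j) i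
        · simp only [hτ, Fin.cons_zero]
          exact ⟨by linarith [(hθ 0).1], by linarith [(hθ 0).2]⟩
        · simp only [hτ, Fin.cons_succ, Fin.cons_zero]
          exact ⟨by linarith [(hθ 0).1], by linarith [(hθ 0).2]⟩
        · simp only [hτ, Fin.cons_succ]
          exact hθ _
      · rw [Fin.sum_univ_succ, Fin.sum_univ_succ]
        simp only [hτ, Fin.cons_zero, Fin.cons_succ]
        have : ∑ i : Fin M, Fin.tail θ i = (∑ i : Fin (M + 1), θ i) - θ 0 := by
          rw [Fin.sum_univ_succ]; ring_nf; rfl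
        rw [this, hθsum]; ring
      · filter_upwards [hae] with x hx
        have hP : (∏ j : Fin (M + 1 + 1), (maxFn n (g j) x).toReal ^ τ j)
            = ∏ i : Fin (M + 1), (maxFn n (hs i) x).toReal ^ θ i := by
          rw [Fin.prod_univ_succ, Fin.prod_univ_succ, Fin.prod_univ_succ]
          simp only [hg, hτ, Fin.cons_zero, Fin.cons_succ]
          rw [← mul_assoc, ← Real.rpow_add_of_nonneg ENNReal.toReal_nonneg
            (by linarith [(hθ 0).1]) (by linarith [(hθ 0).1]), add_halves]
          rfl
        rw [hP, ← hqp1, sub_self, Real.rpow_zero, one_mul, hx]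
    · -- 1 < q < p
      have hp1 : (0:ℝ) < p - 1 := by linarith
      set a : ℝ := (p - q) / (p - 1) with ha
      set b : ℝ := (q - 1) / (p - 1) with hb
      have ha0 : 0 < a := div_pos (by linarith) hp1
      have hb0 : 0 < b := div_pos (by linarith) hp1
      have ha1 : a ≤ 1 := by rw [div_le_one hp1]; linarith
      have hb1 : b ≤ 1 := by rw [div_le_one hp1]; linarith
      set g : Fin (N + 1) → (Fin n → ℝ) → ℝ := Fin.cons h hs with hg
      set τ : Fin (N + 1) → ℝ := Fin.cons a (fun i => θ i * b) with hτ
      refine ⟨g, τ, ?_, ?_, ?_, ?_, hum, hupos, huloc, huA1, ?_⟩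
      · intro i
        refine Fin.cases ?_ (fun j => ?_) i
        · exact hhm
        · exact hmeas j
      · intro i
        refine Fin.cases ?_ (fun j => ?_) i
        · exact hhloc
        · exact hloc j
      · intro i
        refine Fin.cases ?_ (fun j => ?_) i
        · simp only [hτ, Fin.cons_zero]
          exact ⟨ha0, ha1⟩
        · simp only [hτ, Fin.cons_succ]
          exact ⟨mul_pos (hθ j).1 hb0,
            le_trans (mul_le_mul (hθ j).2 hb1 hb0.le one_pos.le) (by norm_num)⟩
      · rw [Fin.sum_univ_succ]
        simp only [hτ, Fin.cons_zero, Fin.cons_succ, ← Finset.sum_mul, hθsum, one_mul]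
        rw [ha, hb, ← add_div, div_eq_one_iff_eq hp1.ne']
        ring
      · filter_upwards [hae, hMh] with x hx hm
        have hm0 : 0 < (maxFn n h x).toReal := ENNReal.toReal_pos hm.1.ne' hm.2.ne
        set m := (maxFn n h x).toReal
        set t : Fin N → ℝ := fun i => (maxFn n (hs i) x).toReal with ht
        have htn : ∀ i, 0 ≤ t i := fun i => ENNReal.toReal_nonneg
        have hP : (∏ j : Fin (N + 1), (maxFn n (g j) x).toReal ^ τ j)
            = m ^ a * (∏ i, t i ^ θ i) ^ b := by
          rw [Fin.prod_univ_succ]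
          simp only [hg, hτ, Fin.cons_zero, Fin.cons_succ]
          congr 1
          rw [← Real.finset_prod_rpow _ _ (fun i _ => Real.rpow_nonneg (htn i) _)]
          exact Finset.prod_congr rfl fun i _ => Real.rpow_mul (htn i) _ _
        rw [hP, hx]
        have hPn : 0 ≤ ∏ i, t i ^ θ i :=
          Finset.prod_nonneg fun i _ => Real.rpow_nonneg (htn i) _
        rw [Real.mul_rpow (Real.rpow_nonneg hm0.le _) (Real.rpow_nonneg hPn _),
          ← Real.rpow_mul hm0.le, ← Real.rpow_mul hPn]
        have e1 : a * (1 - p) = q - p := by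
          rw [ha, div_mul_eq_mul_div, div_eq_iff hp1.ne']; ring
        have e2 : b * (1 - p) = 1 - q := by
          rw [hb, div_mul_eq_mul_div, div_eq_iff hp1.ne']; ring
        rw [e1, e2, mul_assoc]

/-- for `1 ≤ q ≤ p < ∞` with `p > 1`, `N ≥ 1`, `w ∈ Â_{q,N}`, and
`h ∈ L¹_loc` with `Mh` positive and finite a.e., the weight `v = (Mh)^{q-p} w`
belongs to `Â_{p,N+1}` with `‖v‖_{Â_{p,N+1}} ≤ ‖w‖_{Â_{q,N}}^{q/p}`. -/
theorem stmt17 (n : ℕ) (p q : ℝ) (hq : 1 ≤ q) (hqp : q ≤ p) (hp : 1 < p)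
    (N : ℕ) (hN : 1 ≤ N) (w : (Fin n → ℝ) → ℝ) (hw : memAhat n q N w)
    (h : (Fin n → ℝ) → ℝ) (hhm : Measurable h) (hhloc : LocallyIntegrable h volume)
    (hMh : ∀ᵐ x ∂volume, 0 < maxFn n h x ∧ maxFn n h x < ⊤) :
    memAhat n p (N + 1) (fun x => (maxFn n h x).toReal ^ (q - p) * w x) ∧
      AhatConst n p (N + 1) (fun x => (maxFn n h x).toReal ^ (q - p) * w x) ≤
        AhatConst n q N w ^ (q / p) := by
  have hp0 : (0:ℝ) < p := by linarith
  have hq0 : (0:ℝ) < q := by linarith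
  constructor
  · obtain ⟨u, hu⟩ := hw
    exact ⟨u, rep_lift n p q hq hqp hp N hN w u hu h hhm hhloc hMh⟩
  · have key : ∀ u, AhatRep n q N w u →
        AhatConst n p (N + 1) (fun x => (maxFn n h x).toReal ^ (q - p) * w x) ≤
          A1Const n u ^ (1 / p) := fun u hu =>
      iInf₂_le u (rep_lift n p q hq hqp hp N hN w u hu h hhm hhloc hMh)
    rw [← ENNReal.rpow_le_rpow_iff (show (0:ℝ) < p / q by positivity)]
    have hcancel : (AhatConst n q N w ^ (q / p)) ^ (p / q) = AhatConst n q N w := by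
      rw [← ENNReal.rpow_mul, show q / p * (p / q) = 1 by field_simp, ENNReal.rpow_one]
    rw [hcancel]
    conv_rhs => rw [AhatConst]
    refine le_iInf₂ fun u hu => ?_
    calc (AhatConst n p (N + 1) (fun x => (maxFn n h x).toReal ^ (q - p) * w x)) ^ (p / q)
        ≤ (A1Const n u ^ (1 / p)) ^ (p / q) :=
          ENNReal.rpow_le_rpow (key u hu) (by positivity)
      _ = A1Const n u ^ (1 / q) := by
          rw [← ENNReal.rpow_mul, show 1 / p * (p / q) = 1 / q by field_simp]
end
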